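/- Let N, R, k, p be natural numbers with R ≥ 2, k ≥ 1, p ≥ 1 and 4·p·R^k ≤ N, and fix p distinct vertices v_1, …, v_p ∈ Fin N. Then the number of distinct functions F : Fin p × (Fin R)^k → Fin N that arise as F(i, w) = g_w(v_i) for some tuple of permutations g : Fin R → Perm(Fin N) is at least (N/2)^(p·R^k). -/

import Mathlib

/-- For a tuple of permutations `g : Fin R → Perm (Fin N)` and a word
`w = (w_1, …, w_k) ∈ (Fin R)^k`, `wordComp g w` is the composition
`g_{w_k} ∘ ⋯ ∘ g_{w_1}` (with `g_{w_1}` applied first). -/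
def wordComp {N R : ℕ} (g : Fin R → Equiv.Perm (Fin N)) {k : ℕ}
    (w : Fin k → Fin R) : Equiv.Perm (Fin N) :=
  (List.ofFn w).foldl (fun σ r => g r * σ) 1

/-- Any pair of injective maps into `Fin N` with a common index type extends
to a permutation sending `c a` to `d a`. -/
lemma exists_perm_extend {N : ℕ} {A : Type*} (c d : A → Fin N)
    (hc : Function.Injective c) (hd : Function.Injective d) :
    ∃ σ : Equiv.Perm (Fin N), ∀ a, σ (c a) = d a := by
  classical
  let e : {x : Fin N // x ∈ Set.range c} ≃ {x : Fin N // x ∈ Set.range d} :=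
    ((Equiv.ofInjective c hc).symm.trans (Equiv.ofInjective d hd))
  refine ⟨e.extendSubtype, fun a => ?_⟩
  rw [e.extendSubtype_apply_of_mem (c a) ⟨a, rfl⟩]
  show (Equiv.ofInjective d hd) ((Equiv.ofInjective c hc).symm ⟨c a, ⟨a, rfl⟩⟩) = d a
  have : (Equiv.ofInjective c hc).symm ⟨c a, ⟨a, rfl⟩⟩ = a := by
    apply hc; simp [Equiv.apply_ofInjective_symm]
  rw [this]; rfl

lemma realize {N R k p : ℕ} (hk : 1 ≤ k) (v : Fin p → Fin N)
    (V : Fin p → List (Fin R) → Fin N)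
    (hV0 : ∀ i, V i [] = v i)
    (hVinj : ∀ i l i' l', l.length ≤ k → l'.length ≤ k → V i l = V i' l' →
      i = i' ∧ l = l') :
    ∃ g : Fin R → Equiv.Perm (Fin N),
      ∀ i (w : Fin k → Fin R), wordComp g w (v i) = V i (List.ofFn w) := by
  have hg : ∀ r : Fin R, ∃ σ : Equiv.Perm (Fin N),
      ∀ x : {x : Fin p × List (Fin R) // x.2.length < k},
        σ (V x.1.1 x.1.2) = V x.1.1 (x.1.2 ++ [r]) := by
    intro r
    apply exists_perm_extend
    · intro x y hxy
      obtain ⟨h1, h2⟩ := hVinj _ _ _ _ (le_of_lt x.2) (le_of_lt y.2) hxy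
      exact Subtype.ext (Prod.ext h1 h2)
    · intro x y hxy
      obtain ⟨h1, h2⟩ := hVinj _ _ _ _
        (by simpa using x.2) (by simpa using y.2) hxy
      exact Subtype.ext (Prod.ext h1 (by simpa using h2))
  choose g hgspec using hg
  refine ⟨g, fun i w => ?_⟩
  have key : ∀ (l : List (Fin R)), l.length ≤ k → ∀ i,
      l.foldl (fun σ r => g r * σ) 1 (v i) = V i l := by
    intro l
    induction l using List.reverseRecOn with
    | nil => intro _ i; simpa using (hV0 i).symm
    | append_singleton l r ih =>
      intro hlen i
      have hl : l.length < k := by simp at hlen; omega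
      rw [List.foldl_append]
      show (g r * l.foldl (fun σ r => g r * σ) 1) (v i) = _
      rw [Equiv.Perm.mul_apply, ih (le_of_lt hl) i]
      exact hgspec r ⟨(i, l), hl⟩
  simpa [wordComp] using key (List.ofFn w) (by simp) i

lemma sum_pow_le {R k : ℕ} (hR : 2 ≤ R) : ∑ j : Fin k, R ^ (j : ℕ) ≤ R ^ k := by
  rw [Fin.sum_univ_eq_sum_range]
  induction k with
  | zero => simp
  | succ k ih =>
    rw [Finset.sum_range_succ, pow_succ]
    have : R ^ k * 2 ≤ R ^ k * R := by
      exact Nat.mul_le_mul_left _ hR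
    omega

lemma enc_inj {R k : ℕ} {l l' : List (Fin R)} (h : l.length < k) (h' : l'.length < k)
    (heq : (⟨⟨l.length, h⟩, fun m => l.get m⟩ : (j : Fin k) × (Fin (j : ℕ) → Fin R))
         = ⟨⟨l'.length, h'⟩, fun m => l'.get m⟩) : l = l' := by
  obtain ⟨h1, h2⟩ := Sigma.ext_iff.mp heq
  have hlen : l.length = l'.length := by
    simpa using congrArg Fin.val h1
  apply List.ext_get hlen
  intro n hn hn'
  have := (Fin.heq_fun_iff hlen).mp h2 ⟨n, hn⟩
  simpa using this

/-- **Counting assignments to disjoint evaluation trees.** Let `R ≥ 2`,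
`k ≥ 1`, `p ≥ 1` with `4·p·R^k ≤ N`, and fix `p` distinct vertices
`v 1, …, v p ∈ Fin N`.  Then the number of distinct functions
`F : Fin p × (Fin R)^k → Fin N` of the form `F(i, w) = g_w(v i)` for some
tuple of permutations `g` is at least `(N/2)^(p·R^k)`. -/
theorem tree_assignment_count (N R k p : ℕ) (hR : 2 ≤ R) (hk : 1 ≤ k)
    (hp : 1 ≤ p) (hN : 4 * p * R ^ k ≤ N) (v : Fin p → Fin N)
    (hv : Function.Injective v) :
    ((N : ℝ) / 2) ^ (p * R ^ k) ≤
      Nat.card (Set.range (fun g : Fin R → Equiv.Perm (Fin N) =>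
        fun q : Fin p × (Fin k → Fin R) => wordComp g q.2 (v q.1))) := by
  classical
  set M := p * R ^ k with hM
  have hRk : 1 ≤ R ^ k := Nat.one_le_pow _ _ (by omega)
  have hpM : p ≤ M := by calc p = p * 1 := by ring
                           _ ≤ M := Nat.mul_le_mul_left _ hRk
  have hNM : 4 * M ≤ N := by calc 4 * M = 4 * p * R ^ k := by ring
                                  _ ≤ N := hN
  -- internal node index type (depths 0..k-1)
  set D := Fin p × ((j : Fin k) × (Fin (j : ℕ) → Fin R)) with hD
  have hcardD : Fintype.card D ≤ M := by
    have : Fintype.card D = p * ∑ j : Fin k, R ^ (j : ℕ) := by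
      simp [hD, Fintype.card_sigma]
    rw [this, hM]
    exact Nat.mul_le_mul_left _ (sum_pow_le hR)
  set d := Fintype.card D with hdd
  -- an embedding of D into the complement of range v
  have hcompl : Fintype.card D ≤ Fintype.card {x : Fin N // x ∉ Set.range v} := by
    have h1 : Fintype.card {x : Fin N // x ∈ Set.range v} = p := by
      have h := (Fintype.card_congr (Equiv.ofInjective v hv)).symm
      rwa [Fintype.card_fin] at h
    have h2 : Fintype.card {x : Fin N // x ∉ Set.range v} = N - p := by
      have := Fintype.card_subtype_compl (fun x : Fin N => x ∈ Set.range v)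
      simp only [Fintype.card_fin] at this ⊢
      rw [this, h1]
    rw [h2]; omega
  obtain ⟨e'⟩ := Function.Embedding.nonempty_of_card_le hcompl
  -- the fixed injective valuation on internal nodes
  set val₁ : D → Fin N := fun x => if (x.2.1 : ℕ) = 0 then v x.1 else (e' x).1 with hval₁
  have hroot : ∀ (i : Fin p) (x : (j : Fin k) × (Fin (j : ℕ) → Fin R)),
      (x.1 : ℕ) = 0 → val₁ (i, x) = v i := by
    intro i x hx; simp [hval₁, hx]
  have hval₁inj : Function.Injective val₁ := by
    intro ⟨i, x⟩ ⟨i', x'⟩ hxy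
    simp only [hval₁] at hxy
    by_cases h1 : (x.1 : ℕ) = 0 <;> by_cases h2 : (x'.1 : ℕ) = 0
    · rw [if_pos h1, if_pos h2] at hxy
      have hii : i = i' := hv hxy
      subst hii
      have hx : x = x' := by
        obtain ⟨⟨j1, hj1⟩, f⟩ := x; obtain ⟨⟨j2, hj2⟩, f2⟩ := x'
        have e1 : j1 = 0 := h1
        have e2 : j2 = 0 := h2
        subst e1; subst e2
        exact Sigma.ext rfl (heq_of_eq (funext fun m => Fin.elim0 m))
      rw [hx]
    · rw [if_pos h1, if_neg h2] at hxy
      exact absurd (hxy ▸ (e' (i', x')).2) (by simp)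
    · rw [if_neg h1, if_pos h2] at hxy
      exact absurd (hxy.symm ▸ (e' (i, x)).2) (by simp)
    · rw [if_neg h1, if_neg h2] at hxy
      exact e'.injective (Subtype.ext hxy)
  -- the reserved set
  set S : Finset (Fin N) := Finset.univ.image val₁ with hS
  have hScard : S.card = d := by
    rw [hS, Finset.card_image_of_injective _ hval₁inj, Finset.card_univ]
  have hcardCompl : Fintype.card {x : Fin N // x ∉ S} = N - d := by
    have h0 := Fintype.card_subtype_compl (fun x : Fin N => x ∈ S)
    simp only [Fintype.card_fin] at h0
    rw [h0]
    congr 1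
    rw [← hScard]
    exact Fintype.card_coe S
  -- the main injection: embeddings into the complement of S ↦ realized functions
  set T := (Fin p × (Fin k → Fin R)) ↪ {x : Fin N // x ∉ S} with hT
  have hrealize : ∀ emb : T, ∃ g : Fin R → Equiv.Perm (Fin N),
      ∀ (i : Fin p) (w : Fin k → Fin R), wordComp g w (v i) = (emb (i, w)).1 := by
    intro emb
    -- build the valuation on lists
    have hjunk : 0 < p := hp
    set V : Fin p → List (Fin R) → Fin N := fun i l =>
      if h : l.length < k then val₁ (i, ⟨⟨l.length, h⟩, fun m => l.get m⟩)
      else if h' : l.length = k then (emb (i, fun m : Fin k => l.get (Fin.cast h'.symm m))).1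
      else v ⟨0, hjunk⟩ with hV
    have hV0 : ∀ i, V i [] = v i := by
      intro i
      have h0 : ([] : List (Fin R)).length < k := by simpa using (show 0 < k by omega)
      simp only [hV, dif_pos h0]
      exact hroot i _ rfl
    have hVinS : ∀ i l (h : l.length < k), V i l ∈ S := by
      intro i l h
      simp only [hV, dif_pos h, hS]
      exact Finset.mem_image_of_mem _ (Finset.mem_univ _)
    have hVnotS : ∀ i l (h : l.length = k), V i l ∉ S := by
      intro i l h
      have h1 : ¬ l.length < k := by omega
      simp only [hV, dif_neg h1, dif_pos h]
      exact (emb _).2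
    have hVinj : ∀ i l i' l', l.length ≤ k → l'.length ≤ k → V i l = V i' l' →
        i = i' ∧ l = l' := by
      intro i l i' l' hl hl' heq
      rcases lt_or_eq_of_le hl with h1 | h1 <;> rcases lt_or_eq_of_le hl' with h2 | h2
      · simp only [hV, dif_pos h1, dif_pos h2] at heq
        have h3 := hval₁inj heq
        injection h3 with hii hxx
        exact ⟨hii, enc_inj h1 h2 hxx⟩
      · exact absurd (hVinS i l h1) (fun hmem => hVnotS i' l' h2 (heq ▸ hmem))
      · exact absurd (hVinS i' l' h2) (fun hmem => hVnotS i l h1 (heq.symm ▸ hmem))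
      · have h1' : ¬ l.length < k := by omega
        have h2' : ¬ l'.length < k := by omega
        simp only [hV] at heq
        rw [dif_neg h1', dif_neg h2', dif_pos h1, dif_pos h2] at heq
        have h3 := emb.injective (Subtype.ext heq)
        injection h3 with hii hff
        refine ⟨hii, ?_⟩
        apply List.ext_get (by omega)
        intro n hn hn'
        have := congrFun hff ⟨n, by omega⟩
        simpa using this
    obtain ⟨g, hg⟩ := realize hk v V hV0 hVinj
    refine ⟨g, fun i w => ?_⟩
    rw [hg i w]
    have hlen : (List.ofFn w).length = k := by simp
    have h1 : ¬ (List.ofFn w).length < k := by omega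
    simp only [hV]
    rw [dif_neg h1, dif_pos hlen]
    have harg : (fun m : Fin k => (List.ofFn w).get (Fin.cast hlen.symm m)) = w := by
      funext m
      rw [List.get_ofFn]
      exact congrArg w (Fin.ext (by simp))
    rw [harg]
  -- assemble the injection
  set Rng := Set.range (fun g : Fin R → Equiv.Perm (Fin N) =>
      fun q : Fin p × (Fin k → Fin R) => wordComp g q.2 (v q.1)) with hRng
  have hΨ : ∃ Ψ : T → Rng, Function.Injective Ψ := by
    refine ⟨fun emb => ⟨fun q => (emb q).1, ?_⟩, ?_⟩
    · obtain ⟨g, hg⟩ := hrealize emb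
      exact ⟨g, funext fun q => hg q.1 q.2⟩
    · intro a b hab
      have h := congrArg Subtype.val hab
      ext q
      have h2 : ((a q : Fin N)) = (b q : Fin N) := congrFun h q
      exact congrArg Fin.val h2
  obtain ⟨Ψ, hΨinj⟩ := hΨ
  have hfin : Finite Rng := by
    have : Finite ((Fin p × (Fin k → Fin R)) → Fin N) := by infer_instance
    exact Set.Finite.to_subtype (Set.toFinite _)
  have hcount : Fintype.card T ≤ Nat.card Rng := by
    rw [← Nat.card_eq_fintype_card]
    exact Nat.card_le_card_of_injective Ψ hΨinj
  -- compute/estimate Fintype.card T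
  have hcardT : Fintype.card T = (N - d).descFactorial M := by
    rw [Fintype.card_congr (Equiv.cast hT), Fintype.card_embedding_eq, hcardCompl]
    congr 1
    simp [hM, Fintype.card_fun]
  have hd_le : d ≤ M := hcardD
  have hlow : (N - d + 1 - M) ^ M ≤ (N - d).descFactorial M :=
    Nat.pow_sub_le_descFactorial _ _
  have hhalf : (N : ℝ) / 2 ≤ ((N - d + 1 - M : ℕ) : ℝ) := by
    have : N ≤ 2 * (N - d + 1 - M) := by omega
    have h2 : (N : ℝ) ≤ 2 * ((N - d + 1 - M : ℕ) : ℝ) := by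
      exact_mod_cast this
    linarith
  calc ((N : ℝ) / 2) ^ M ≤ (((N - d + 1 - M : ℕ) : ℝ)) ^ M := by
        apply pow_le_pow_left₀ (by positivity) hhalf
    _ = (((N - d + 1 - M) ^ M : ℕ) : ℝ) := by push_cast; ring
    _ ≤ (((N - d).descFactorial M : ℕ) : ℝ) := by exact_mod_cast hlow
    _ ≤ (Nat.card Rng : ℝ) := by
        have := hcardT ▸ hcount
        exact_mod_cast this
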